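/- Let w : ℝ → Matrix (Fin d) (Fin d) ℝ be continuous with w(0) = I, and let α : ℝ → ℝ be continuous, nonnegative, with α(t) > 0 for t > 0. Define η(s) = ∫₀ˢ α(t)·w(t) dt. Then det η(s) = ∫₀ˢ⋯∫₀ˢ α(t₁)⋯α(t_d) · det(w₁(t₁), …, w_d(t_d)) dt₁⋯dt_d, where wⱼ(t) denotes the j-th column of w(t), and there exists ε₀ > 0 such that det η(s) > ((1/2)∫₀ˢ α(t) dt)^d for all s ∈ (0, ε₀). -/

import Mathlib

open MeasureTheory

lemma stmt4_prod_indicator_eq {d : ℕ} (S : Set ℝ) (g : Fin d → ℝ → ℝ) (x : Fin d → ℝ) :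
    (∏ i, S.indicator (g i) (x i))
      = (Set.univ.pi fun _ : Fin d => S).indicator (fun x => ∏ i, g i (x i)) x := by
  by_cases h : x ∈ Set.univ.pi fun _ : Fin d => S
  · rw [Set.indicator_of_mem h]
    exact Finset.prod_congr rfl fun i _ =>
      Set.indicator_of_mem (h i (Set.mem_univ i)) _
  · rw [Set.indicator_of_notMem h]
    rw [Set.mem_univ_pi] at h
    push_neg at h
    obtain ⟨i, hi⟩ := h
    exact Finset.prod_eq_zero (Finset.mem_univ i) (Set.indicator_of_notMem hi _)

lemma stmt4_point_eq {d : ℕ} (w : ℝ → Matrix (Fin d) (Fin d) ℝ) (α : ℝ → ℝ)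
    (S : Set ℝ) (x : Fin d → ℝ) :
    (Set.univ.pi fun _ : Fin d => S).indicator
      (fun t => (∏ j, α (t j)) * (Matrix.of fun i j : Fin d => w (t j) i j).det) x
    = ∑ σ : Equiv.Perm (Fin d), ((Equiv.Perm.sign σ : ℤ) : ℝ) *
        ∏ i, S.indicator (fun t => α t * w t (σ i) i) (x i) := by
  by_cases h : x ∈ Set.univ.pi fun _ : Fin d => S
  · rw [Set.indicator_of_mem h, Matrix.det_apply', Finset.mul_sum]
    refine Finset.sum_congr rfl fun σ _ => ?_
    have hmem : ∀ i : Fin d, S.indicator (fun t => α t * w t (σ i) i) (x i)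
        = α (x i) * w (x i) (σ i) i := fun i =>
      Set.indicator_of_mem (h i (Set.mem_univ i)) _
    simp only [hmem, Matrix.of_apply, Finset.prod_mul_distrib]
    ring
  · rw [Set.indicator_of_notMem h]
    rw [Set.mem_univ_pi] at h
    push_neg at h
    obtain ⟨i, hi⟩ := h
    refine (Finset.sum_eq_zero fun σ _ => ?_).symm
    rw [Finset.prod_eq_zero (Finset.mem_univ i) (Set.indicator_of_notMem hi _), mul_zero]

lemma stmt4_det_eq {d : ℕ} (w : ℝ → Matrix (Fin d) (Fin d) ℝ)
    (hw : ∀ i j, Continuous fun t => w t i j)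
    (α : ℝ → ℝ) (hα : Continuous α) (s : ℝ) (hs : 0 ≤ s) :
    (Matrix.of fun i j : Fin d => ∫ t in (0:ℝ)..s, α t * w t i j).det
      = ∫ t in Set.univ.pi fun _ : Fin d => Set.Ioc (0:ℝ) s,
          (∏ j, α (t j)) * (Matrix.of fun i j : Fin d => w (t j) i j).det := by
  set S := Set.Ioc (0:ℝ) s with hSdef
  have hSm : MeasurableSet S := measurableSet_Ioc
  have hPm : MeasurableSet (Set.univ.pi fun _ : Fin d => S) :=
    MeasurableSet.univ_pi fun _ => hSm
  have hInt : ∀ a b : Fin d, Integrable (S.indicator fun t => α t * w t a b) :=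
    fun a b => ((hα.mul (hw a b)).integrableOn_Ioc).integrable_indicator hSm
  calc (Matrix.of fun i j : Fin d => ∫ t in (0:ℝ)..s, α t * w t i j).det
      = ∑ σ : Equiv.Perm (Fin d), ((Equiv.Perm.sign σ : ℤ) : ℝ) *
          ∏ i, ∫ t, S.indicator (fun t => α t * w t (σ i) i) t := by
        rw [Matrix.det_apply']
        refine Finset.sum_congr rfl fun σ _ => ?_
        congr 1
        refine Finset.prod_congr rfl fun i _ => ?_
        show (∫ t in (0:ℝ)..s, α t * w t (σ i) i) = _
        rw [intervalIntegral.integral_of_le hs, ← integral_indicator hSm]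
    _ = ∑ σ : Equiv.Perm (Fin d), ((Equiv.Perm.sign σ : ℤ) : ℝ) *
          ∫ x : Fin d → ℝ, ∏ i, S.indicator (fun t => α t * w t (σ i) i) (x i) := by
        refine Finset.sum_congr rfl fun σ _ => ?_
        rw [integral_fintype_prod_volume_eq_prod (ι := Fin d)
          (fun i => S.indicator (fun t => α t * w t (σ i) i))]
    _ = ∫ x : Fin d → ℝ, ∑ σ : Equiv.Perm (Fin d), ((Equiv.Perm.sign σ : ℤ) : ℝ) *
          ∏ i, S.indicator (fun t => α t * w t (σ i) i) (x i) := by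
        rw [integral_finset_sum _ fun σ _ =>
          (Integrable.fintype_prod fun i => hInt (σ i) i).const_mul _]
        exact Finset.sum_congr rfl fun σ _ => (integral_const_mul _ _).symm
    _ = ∫ x : Fin d → ℝ, (Set.univ.pi fun _ : Fin d => S).indicator
          (fun t => (∏ j, α (t j)) * (Matrix.of fun i j : Fin d => w (t j) i j).det) x := by
        refine integral_congr_ae (Filter.Eventually.of_forall fun x => ?_)
        exact (stmt4_point_eq w α S x).symm
    _ = _ := integral_indicator hPm

theorem stmt_4 (d : ℕ) (hd : 0 < d)
    (w : ℝ → Matrix (Fin d) (Fin d) ℝ)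
    (hw : ∀ i j, Continuous fun t => w t i j) (hw0 : w 0 = 1)
    (α : ℝ → ℝ) (hα : Continuous α) (hαnn : ∀ t, 0 ≤ α t)
    (hαpos : ∀ t > (0:ℝ), 0 < α t)
    (η : ℝ → Matrix (Fin d) (Fin d) ℝ)
    (hη : η = fun s => Matrix.of fun i j : Fin d => ∫ t in (0:ℝ)..s, α t * w t i j) :
    (∀ s : ℝ, 0 ≤ s →
      (η s).det = ∫ t in Set.univ.pi fun _ : Fin d => Set.Ioc (0:ℝ) s,
        (∏ j, α (t j)) * Matrix.det (Matrix.of fun i j : Fin d => w (t j) i j)) ∧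
    ∃ ε₀ > (0:ℝ), ∀ s ∈ Set.Ioo (0:ℝ) ε₀,
      ((1/2) * ∫ t in (0:ℝ)..s, α t) ^ d < (η s).det := by
  subst hη
  have part1 : ∀ s : ℝ, 0 ≤ s →
      (Matrix.of fun i j : Fin d => ∫ t in (0:ℝ)..s, α t * w t i j).det
        = ∫ t in Set.univ.pi fun _ : Fin d => Set.Ioc (0:ℝ) s,
          (∏ j, α (t j)) * (Matrix.of fun i j : Fin d => w (t j) i j).det :=
    fun s hs => stmt4_det_eq w hw α hα s hs
  refine ⟨part1, ?_⟩
  set G : (Fin d → ℝ) → ℝ := fun t => (Matrix.of fun i j : Fin d => w (t j) i j).det with hGdef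
  have hGcont : Continuous G :=
    Continuous.matrix_det (continuous_matrix fun i j => (hw i j).comp (continuous_apply j))
  have hG0 : G 0 = 1 := by
    have : (Matrix.of fun i j : Fin d => w ((0 : Fin d → ℝ) j) i j) = w 0 := rfl
    rw [hGdef]
    simp only [this, hw0, Matrix.det_one]
  obtain ⟨δ, hδ, hball⟩ := Metric.continuousAt_iff.mp (hGcont.continuousAt (x := 0))
    (1/4) (by norm_num)
  refine ⟨δ, hδ, fun s hs => ?_⟩
  have hs0 : (0:ℝ) ≤ s := le_of_lt hs.1
  set S := Set.Ioc (0:ℝ) s with hSdef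
  set P := Set.univ.pi fun _ : Fin d => S with hPdef
  have hSm : MeasurableSet S := measurableSet_Ioc
  have hPm : MeasurableSet P := MeasurableSet.univ_pi fun _ => hSm
  set I := ∫ t in (0:ℝ)..s, α t with hIdef
  have hI : 0 < I :=
    intervalIntegral.intervalIntegral_pos_of_pos_on (hα.intervalIntegrable 0 s)
      (fun x hx => hαpos x hx.1) hs.1
  have hGge : ∀ x ∈ P, (3:ℝ)/4 ≤ G x := by
    intro x hx
    have hxd : dist x 0 < δ := by
      rw [dist_pi_lt_iff hδ]
      intro i
      have hxi := hx i (Set.mem_univ i)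
      rw [Pi.zero_apply, Real.dist_eq, sub_zero, abs_of_pos hxi.1]
      exact lt_of_le_of_lt hxi.2 hs.2
    have := hball hxd
    rw [hG0, Real.dist_eq] at this
    have := (abs_lt.mp this).1
    linarith
  have hInt : ∀ a b : Fin d, Integrable (S.indicator fun t => α t * w t a b) :=
    fun a b => ((hα.mul (hw a b)).integrableOn_Ioc).integrable_indicator hSm
  have hIntProd : Integrable (fun x : Fin d → ℝ => ∏ i, S.indicator α (x i)) :=
    Integrable.fintype_prod fun _ => hα.integrableOn_Ioc.integrable_indicator hSm
  have hindProd : (P.indicator fun x : Fin d → ℝ => ∏ j, α (x j))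
      = fun x => ∏ i, S.indicator α (x i) :=
    funext fun x => (stmt4_prod_indicator_eq S (fun _ => α) x).symm
  have hProdOn : IntegrableOn (fun x : Fin d → ℝ => ∏ j, α (x j)) P := by
    refine (integrable_indicator_iff hPm).mp ?_
    rw [hindProd]; exact hIntProd
  have hFOn : IntegrableOn (fun t : Fin d → ℝ => (∏ j, α (t j)) * G t) P := by
    refine (integrable_indicator_iff hPm).mp ?_
    have : (P.indicator fun t : Fin d → ℝ => (∏ j, α (t j)) * G t)
        = fun x => ∑ σ : Equiv.Perm (Fin d), ((Equiv.Perm.sign σ : ℤ) : ℝ) *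
            ∏ i, S.indicator (fun t => α t * w t (σ i) i) (x i) :=
      funext fun x => stmt4_point_eq w α S x
    rw [this]
    exact integrable_finset_sum _ fun σ _ =>
      (Integrable.fintype_prod fun i => hInt (σ i) i).const_mul _
  have hPiInt : (∫ x in P, ∏ j, α (x j)) = I ^ d := by
    rw [← integral_indicator hPm, hindProd,
      integral_fintype_prod_volume_eq_pow (ι := Fin d) (S.indicator α), Fintype.card_fin]
    congr 1
    rw [integral_indicator hSm, hIdef, intervalIntegral.integral_of_le hs0]
  have hmono : (3/4 : ℝ) * I ^ d ≤ ∫ t in P, (∏ j, α (t j)) * G t := by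
    have hle : (∫ t in P, (3/4 : ℝ) * ∏ j, α (t j)) ≤ ∫ t in P, (∏ j, α (t j)) * G t := by
      refine setIntegral_mono_on (hProdOn.const_mul _) hFOn hPm fun x hx => ?_
      have h1 : 0 ≤ ∏ j, α (x j) := Finset.prod_nonneg fun j _ => hαnn _
      have h2 := hGge x hx
      nlinarith
    calc (3/4 : ℝ) * I ^ d = ∫ t in P, (3/4 : ℝ) * ∏ j, α (t j) := by
          rw [integral_const_mul, hPiInt]
      _ ≤ _ := hle
  have hkey : (Matrix.of fun i j : Fin d => ∫ t in (0:ℝ)..s, α t * w t i j).det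
      = ∫ t in P, (∏ j, α (t j)) * G t := part1 s hs0
  rw [hkey]
  have hpow : (1/2 : ℝ) ^ d ≤ 1/2 := by
    calc (1/2 : ℝ) ^ d ≤ (1/2 : ℝ) ^ 1 :=
          pow_le_pow_of_le_one (by norm_num) (by norm_num) hd
      _ = 1/2 := pow_one _
  have hId : 0 < I ^ d := pow_pos hI d
  calc ((1/2 : ℝ) * I) ^ d = (1/2 : ℝ) ^ d * I ^ d := mul_pow _ _ _
    _ ≤ (1/2 : ℝ) * I ^ d := mul_le_mul_of_nonneg_right hpow (le_of_lt hId)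
    _ < (3/4 : ℝ) * I ^ d := by nlinarith
    _ ≤ _ := hmono
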